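/- Let H be a 2-periodic discrete Schrödinger operator on ℓ²(ℤ) with potential values v(0), v(1) ∈ ℝ. Then the spectrum of H equals [½(v(0)+v(1)−δ), min{v(0),v(1)}] ∪ [max{v(0),v(1)}, ½(v(0)+v(1)+δ)], where δ = √(16 + v(0)² − 2v(0)v(1) + v(1)²). -/

import Mathlib

noncomputable section
open Complex
open scoped ENNReal

namespace Stmt5Aux

set_option synthInstance.maxHeartbeats 1000000
set_option maxHeartbeats 1000000

abbrev Hs := lp (fun _ : ℤ => ℂ) 2

instance : Nontrivial Hs := by
  refine ⟨⟨lp.single 2 (0:ℤ) (1:ℂ), 0, fun h => ?_⟩⟩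
  have h0 := congrArg (fun f : Hs => (f : ∀ _ : ℤ, ℂ) 0) h
  simp only [lp.single_apply] at h0
  simp at h0

lemma two_toReal : (2 : ℝ≥0∞).toReal = 2 := by norm_num

lemma memℓp_shift (x : Hs) (k : ℤ) : Memℓp (fun n => x (n + k)) 2 := by
  apply memℓp_gen
  have h := (lp.memℓp x).summable (by norm_num [two_toReal] : 0 < (2:ℝ≥0∞).toReal)
  simpa [Function.comp_def] using ((Equiv.addRight k).summable_iff
    (f := fun i : ℤ => ‖x i‖ ^ (2:ℝ≥0∞).toReal)).2 h

def shiftL (k : ℤ) : Hs →L[ℂ] Hs :=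
  LinearMap.mkContinuous
    { toFun := fun x => ⟨fun n => x (n + k), memℓp_shift x k⟩
      map_add' := by
        intro x y; apply lp.ext; funext n
        simp [lp.coeFn_add]; rfl
      map_smul' := by
        intro c x; apply lp.ext; funext n
        simp [lp.coeFn_smul] }
    1
    (by
      intro x
      rw [one_mul]
      have hp : 0 < (2:ℝ≥0∞).toReal := by norm_num
      have h1 := lp.norm_eq_tsum_rpow hp (⟨fun n => x (n + k), memℓp_shift x k⟩ : Hs)
      have h2 := lp.norm_eq_tsum_rpow hp x
      have h3 : ∑' n : ℤ, ‖x (n + k)‖ ^ (2:ℝ≥0∞).toReal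
          = ∑' n : ℤ, ‖x n‖ ^ (2:ℝ≥0∞).toReal :=
        (Equiv.addRight k).tsum_eq (fun i : ℤ => ‖x i‖ ^ (2:ℝ≥0∞).toReal)
      apply le_of_eq
      show ‖(⟨fun n => x (n + k), memℓp_shift x k⟩ : Hs)‖ = ‖x‖
      rw [h1, h2]
      exact congrArg (· ^ (1 / (2:ℝ≥0∞).toReal)) h3)

@[simp] lemma shiftL_apply (k : ℤ) (x : Hs) (n : ℤ) : shiftL k x n = x (n + k) := rfl


lemma shiftL_norm_apply (k : ℤ) (x : Hs) : ‖shiftL k x‖ = ‖x‖ := by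
  have hp : 0 < (2:ℝ≥0∞).toReal := by norm_num
  have h1 := lp.norm_eq_tsum_rpow hp (shiftL k x)
  have h2 := lp.norm_eq_tsum_rpow hp x
  have h3 : ∑' n : ℤ, ‖x (n + k)‖ ^ (2:ℝ≥0∞).toReal
      = ∑' n : ℤ, ‖x n‖ ^ (2:ℝ≥0∞).toReal :=
    (Equiv.addRight k).tsum_eq (fun i : ℤ => ‖x i‖ ^ (2:ℝ≥0∞).toReal)
  rw [h1, h2]
  exact congrArg (· ^ (1 / (2:ℝ≥0∞).toReal)) h3

def Dop : Hs →L[ℂ] Hs := shiftL 1 + shiftL (-1)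

lemma Dop_apply (x : Hs) (n : ℤ) : Dop x n = x (n + 1) + x (n - 1) := by
  have : Dop x = shiftL 1 x + shiftL (-1) x := rfl
  rw [this]
  have := lp.coeFn_add (shiftL 1 x) (shiftL (-1) x)
  calc (shiftL 1 x + shiftL (-1) x : Hs) n
      = shiftL 1 x n + shiftL (-1) x n := by rw [lp.coeFn_add]; rfl
    _ = x (n + 1) + x (n - 1) := by rw [shiftL_apply, shiftL_apply, sub_eq_add_neg]

lemma Dop_norm_le : ‖Dop‖ ≤ 2 := by
  apply ContinuousLinearMap.opNorm_le_bound _ (by norm_num)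
  intro x
  have : Dop x = shiftL 1 x + shiftL (-1) x := rfl
  rw [this]
  calc ‖shiftL 1 x + shiftL (-1) x‖ ≤ ‖shiftL 1 x‖ + ‖shiftL (-1) x‖ := norm_add_le _ _
    _ = 2 * ‖x‖ := by rw [shiftL_norm_apply, shiftL_norm_apply]; ring

lemma shift_sym (k : ℤ) (x y : Hs) :
    inner ℂ (shiftL k x) y = inner ℂ x (shiftL (-k) y) := by
  rw [lp.inner_eq_tsum, lp.inner_eq_tsum]
  have h := (Equiv.addRight k).tsum_eq
    (fun m : ℤ => inner ℂ (x m) (shiftL (-k) y m))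
  rw [← h]
  apply tsum_congr
  intro n
  simp only [Equiv.coe_addRight, shiftL_apply, RCLike.inner_apply]
  norm_num

lemma Dop_selfAdjoint : IsSelfAdjoint Dop := by
  rw [ContinuousLinearMap.isSelfAdjoint_iff_isSymmetric]
  intro x y
  show inner ℂ (Dop x) y = inner ℂ x (Dop y)
  have h1 : Dop x = shiftL 1 x + shiftL (-1) x := rfl
  have h2 : Dop y = shiftL 1 y + shiftL (-1) y := rfl
  rw [h1, h2, inner_add_left, inner_add_right, shift_sym 1 x y, shift_sym (-1) x y]
  norm_num [add_comm]

lemma sub_alg_apply (A : Hs →L[ℂ] Hs) (c : ℂ) (x : Hs) (n : ℤ) :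
    (A - algebraMap ℂ (Hs →L[ℂ] Hs) c) x n = A x n - c * x n := by
  rw [ContinuousLinearMap.sub_apply]
  have h : ((A x - algebraMap ℂ (Hs →L[ℂ] Hs) c x : Hs) : ∀ _ : ℤ, ℂ) n
      = A x n - (algebraMap ℂ (Hs →L[ℂ] Hs) c x) n := by
    rw [lp.coeFn_sub]; rfl
  rw [h]
  congr 1

lemma quad_expand (T : Hs →L[ℂ] Hs) (s r : ℂ) :
    (T - algebraMap ℂ (Hs →L[ℂ] Hs) s) * (T - algebraMap ℂ (Hs →L[ℂ] Hs) r)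
      = T * T - algebraMap ℂ (Hs →L[ℂ] Hs) (s + r) * T
        + algebraMap ℂ (Hs →L[ℂ] Hs) (s * r) := by
  have h1 : T * algebraMap ℂ (Hs →L[ℂ] Hs) r = algebraMap ℂ (Hs →L[ℂ] Hs) r * T :=
    (Algebra.commutes r T).symm
  rw [sub_mul, mul_sub, mul_sub, h1, ← map_mul, map_add, add_mul]
  abel

lemma Dsq_selfAdjoint : IsSelfAdjoint (Dop * Dop) := by
  show star (Dop * Dop) = Dop * Dop
  rw [star_mul, Dop_selfAdjoint.star_eq]

lemma Dsq_spec_bounds {ξ : ℂ} (hξ : ξ ∈ spectrum ℂ (Dop * Dop)) :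
    ξ = (ξ.re : ℂ) ∧ 0 ≤ ξ.re ∧ ξ.re ≤ 4 := by
  have hreal : ξ = (ξ.re : ℂ) := Dsq_selfAdjoint.mem_spectrum_eq_re hξ
  refine ⟨hreal, ?_, ?_⟩
  · by_contra hneg
    push_neg at hneg
    set s : ℝ := -ξ.re with hs
    have hs0 : 0 < s := by simp [hs]; linarith
    set μ : ℂ := Complex.I * (Real.sqrt s : ℂ) with hμ
    have hμ2 : μ ^ 2 = ξ := by
      rw [hμ, mul_pow, Complex.I_sq,
        show ((Real.sqrt s : ℝ) : ℂ) ^ 2 = (((Real.sqrt s ^ 2 : ℝ)) : ℂ) by push_cast; ring,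
        Real.sq_sqrt hs0.le, hreal, hs]
      push_cast; ring
    have hμim : μ.im ≠ 0 := by
      rw [hμ]
      simp [Real.sqrt_ne_zero'.2 hs0]
    have hnotmem : ∀ c : ℂ, c.im ≠ 0 → IsUnit (algebraMap ℂ (Hs →L[ℂ] Hs) c - Dop) := by
      intro c hc
      rw [← spectrum.notMem_iff]
      intro hmem
      exact hc (by rw [Dop_selfAdjoint.mem_spectrum_eq_re hmem]; simp)
    have h1 := hnotmem μ hμim
    have h2 := hnotmem (-μ) (by simpa using hμim)
    have expand : (algebraMap ℂ (Hs →L[ℂ] Hs) μ - Dop) * (algebraMap ℂ (Hs →L[ℂ] Hs) (-μ) - Dop)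
        = algebraMap ℂ (Hs →L[ℂ] Hs) (μ * (-μ)) - algebraMap ℂ (Hs →L[ℂ] Hs) μ * Dop
          - Dop * algebraMap ℂ (Hs →L[ℂ] Hs) (-μ) + Dop * Dop := by
      rw [sub_mul, mul_sub, mul_sub, ← map_mul]
      abel
    have key : algebraMap ℂ (Hs →L[ℂ] Hs) ξ - Dop * Dop
        = -((algebraMap ℂ (Hs →L[ℂ] Hs) μ - Dop) * (algebraMap ℂ (Hs →L[ℂ] Hs) (-μ) - Dop)) := by
      have c1 : Dop * algebraMap ℂ (Hs →L[ℂ] Hs) (-μ)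
          = -(algebraMap ℂ (Hs →L[ℂ] Hs) μ * Dop) := by
        rw [map_neg, mul_neg, ← Algebra.commutes μ Dop]
      have c2 : μ * -μ = -ξ := by rw [← hμ2]; ring
      rw [expand, c1, c2, map_neg]
      abel
    rw [spectrum.mem_iff] at hξ
    exact hξ (by rw [key]; exact (h1.mul h2).neg)
  · have hnorm := spectrum.norm_le_norm_of_mem hξ
    have hD : ‖Dop * Dop‖ ≤ 4 := by
      refine le_trans (norm_mul_le _ _) ?_
      nlinarith [Dop_norm_le, norm_nonneg Dop]
    have h4 : ‖ξ‖ ≤ 4 := le_trans hnorm hD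
    calc ξ.re ≤ |ξ.re| := le_abs_self _
      _ = ‖(ξ.re : ℂ)‖ := by rw [Complex.norm_real, Real.norm_eq_abs]
      _ = ‖ξ‖ := by rw [← hreal]
      _ ≤ 4 := h4

def wfun (ζ : ℂ) (u0 u1 : ℝ) : ℤ → ℂ :=
  fun n => ζ ^ n * (if Even n then (u0 : ℂ) else (u1 : ℂ))

lemma wfun_norm {ζ : ℂ} (habs : ‖ζ‖ = 1) (u0 u1 : ℝ) (n : ℤ) :
    ‖wfun ζ u0 u1 n‖ = if Even n then |u0| else |u1| := by
  rw [wfun, norm_mul]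
  have h1 : ‖ζ ^ n‖ = 1 := by
    rw [norm_zpow, habs, one_zpow]
  rw [h1, one_mul]
  by_cases h : Even n
  · rw [if_pos h, if_pos h, Complex.norm_real, Real.norm_eq_abs]
  · rw [if_neg h, if_neg h, Complex.norm_real, Real.norm_eq_abs]

def trunc (f : ℤ → ℂ) (N : ℕ) : ℤ → ℂ :=
  fun n => if 0 ≤ n ∧ n ≤ 2 * N + 1 then f n else 0

lemma trunc_mem (f : ℤ → ℂ) (N : ℕ) : Memℓp (trunc f N) 2 := by
  refine Memℓp.of_exponent_ge (memℓp_zero ?_) (by norm_num)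
  apply Set.Finite.subset (Set.finite_Icc (0 : ℤ) (2 * N + 1))
  intro n hn
  simp only [Set.mem_setOf_eq, trunc] at hn
  by_contra hmem
  rw [Set.mem_Icc] at hmem
  rw [if_neg (fun hc => hmem ⟨hc.1, hc.2⟩)] at hn
  exact hn rfl

def truncLp (f : ℤ → ℂ) (N : ℕ) : Hs := ⟨trunc f N, trunc_mem f N⟩

lemma truncLp_apply (f : ℤ → ℂ) (N : ℕ) (n : ℤ) :
    truncLp f N n = if 0 ≤ n ∧ n ≤ 2 * N + 1 then f n else 0 := rfl

lemma rpow_two_eq (r : ℝ) (hr : 0 ≤ r) : r ^ (2 : ℝ≥0∞).toReal = r ^ (2 : ℕ) := by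
  rw [two_toReal, show (2:ℝ) = ((2:ℕ):ℝ) by norm_num, Real.rpow_natCast]

lemma sum_lower (x : Hs) (a : ℝ) (ha : 0 ≤ a) (N : ℕ) (g : ℕ → ℤ)
    (hg : Function.Injective g)
    (hbd : ∀ k, k ∈ Finset.range (N + 1) → a ≤ ‖x (g k)‖) :
    (N + 1 : ℝ) * a ^ 2 ≤ ‖x‖ ^ 2 := by
  have hp : 0 < (2 : ℝ≥0∞).toReal := by norm_num
  have hs := lp.sum_rpow_le_norm_rpow hp x ((Finset.range (N + 1)).image g)
  rw [Finset.sum_image (fun k _ l _ h => hg h)] at hs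
  have h1 : ∀ k ∈ Finset.range (N + 1), a ^ 2 ≤ ‖x (g k)‖ ^ (2 : ℝ≥0∞).toReal := by
    intro k hk
    rw [rpow_two_eq _ (norm_nonneg _)]
    have := hbd k hk
    nlinarith [norm_nonneg (x (g k))]
  have h2 : (N + 1 : ℝ) * a ^ 2 ≤ ∑ k ∈ Finset.range (N + 1), ‖x (g k)‖ ^ (2 : ℝ≥0∞).toReal := by
    calc (N + 1 : ℝ) * a ^ 2 = ∑ _k ∈ Finset.range (N + 1), a ^ 2 := by
          rw [Finset.sum_const, Finset.card_range]
          push_cast; ring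
      _ ≤ _ := Finset.sum_le_sum h1
  calc (N + 1 : ℝ) * a ^ 2 ≤ ‖x‖ ^ (2 : ℝ≥0∞).toReal := le_trans h2 hs
    _ = ‖x‖ ^ 2 := rpow_two_eq _ (lp.norm_nonneg' x)

lemma norm_sq_le_of_support (y : Hs) (F : Finset ℤ) (K : ℝ) (hK : 0 ≤ K)
    (hbd : ∀ n, ‖y n‖ ≤ K) (hsupp : ∀ n, n ∉ F → y n = 0) :
    ‖y‖ ^ 2 ≤ F.card * K ^ 2 := by
  have hp : 0 < (2 : ℝ≥0∞).toReal := by norm_num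
  have h1 := lp.norm_rpow_eq_tsum hp y
  have h2 : ∑' n : ℤ, ‖y n‖ ^ (2 : ℝ≥0∞).toReal
      = ∑ n ∈ F, ‖y n‖ ^ (2 : ℝ≥0∞).toReal := by
    apply tsum_eq_sum
    intro n hn
    rw [hsupp n hn]
    simp [Real.zero_rpow, two_toReal]
  have h3 : ∑ n ∈ F, ‖y n‖ ^ (2 : ℝ≥0∞).toReal ≤ F.card * K ^ 2 := by
    calc ∑ n ∈ F, ‖y n‖ ^ (2 : ℝ≥0∞).toReal ≤ ∑ _n ∈ F, K ^ 2 := by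
          apply Finset.sum_le_sum
          intro n _
          rw [rpow_two_eq _ (norm_nonneg _)]
          have := hbd n
          nlinarith [norm_nonneg (y n)]
      _ = F.card * K ^ 2 := by rw [Finset.sum_const]; push_cast; ring
  calc ‖y‖ ^ 2 = ‖y‖ ^ (2 : ℝ≥0∞).toReal := (rpow_two_eq _ (lp.norm_nonneg' y)).symm
    _ = _ := h1
    _ ≤ F.card * K ^ 2 := h2 ▸ h3

section Potential

variable (v : ℤ → ℝ) (hper : ∀ n : ℤ, v (n + 2) = v n)

include hper

lemma v_even (m : ℤ) : v (2 * m) = v 0 := by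
  induction m using Int.induction_on with
  | zero => norm_num
  | succ k ih =>
      have h := hper (2 * k)
      rw [show (2 : ℤ) * (k + 1) = 2 * k + 2 by ring, h]
      exact ih
  | pred k ih =>
      have h := hper (2 * (-(k:ℤ) - 1))
      rw [show (2 : ℤ) * (-(k:ℤ) - 1) + 2 = 2 * (-(k:ℤ)) by ring] at h
      rw [← h]
      exact ih

lemma v_odd (m : ℤ) : v (2 * m + 1) = v 1 := by
  induction m using Int.induction_on with
  | zero => norm_num
  | succ k ih =>
      have h := hper (2 * k + 1)
      rw [show (2 : ℤ) * (k + 1) + 1 = 2 * k + 1 + 2 by ring, h]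
      exact ih
  | pred k ih =>
      have h := hper (2 * (-(k:ℤ) - 1) + 1)
      rw [show (2 : ℤ) * (-(k:ℤ) - 1) + 1 + 2 = 2 * (-(k:ℤ)) + 1 by ring] at h
      rw [← h]
      exact ih

lemma v_eq (n : ℤ) : v n = if Even n then v 0 else v 1 := by
  rcases Int.even_or_odd n with ⟨m, hm⟩ | ⟨m, hm⟩
  · rw [if_pos ⟨m, hm⟩, hm, show m + m = 2 * m by ring, v_even v hper]
  · have hodd : Odd n := ⟨m, hm⟩
    rw [if_neg (Int.not_even_iff_odd.2 hodd), hm, v_odd v hper]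

lemma v_pair_sum (n : ℤ) : v (n + 1) + v n = v 0 + v 1 := by
  rcases Int.even_or_odd n with he | ho
  · have h1 : ¬ Even (n + 1) := by simp [Int.even_add_one, he]
    rw [v_eq v hper n, v_eq v hper (n + 1), if_pos he, if_neg h1]; ring
  · have h0 : ¬ Even n := Int.not_even_iff_odd.2 ho
    have h1 : Even (n + 1) := Int.even_add_one.2 h0
    rw [v_eq v hper n, v_eq v hper (n + 1), if_pos h1, if_neg h0]

lemma v_prod (n : ℤ) : (v n - v 0) * (v n - v 1) = 0 := by
  rcases Int.even_or_odd n with he | ho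
  · rw [v_eq v hper n, if_pos he]; ring
  · rw [v_eq v hper n, if_neg (Int.not_even_iff_odd.2 ho)]; ring

lemma v_shift (n : ℤ) : v (n - 1) = v (n + 1) := by
  have := hper (n - 1)
  rw [show n - 1 + 2 = n + 1 by ring] at this
  exact this.symm

variable (H : Hs →L[ℂ] Hs)
  (hH : ∀ (x : Hs) (n : ℤ), H x n = x (n + 1) + x (n - 1) + (v n : ℂ) * x n)

include hH

omit hper in
lemma H_selfAdjoint : IsSelfAdjoint H := by
  have hHD : H = Dop + (H - Dop) := by abel
  rw [ContinuousLinearMap.isSelfAdjoint_iff_isSymmetric]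
  have hDsym := ContinuousLinearMap.isSelfAdjoint_iff_isSymmetric.1 Dop_selfAdjoint
  intro x y
  show inner ℂ (H x) y = inner ℂ x (H y)
  have hV : ∀ (z : Hs) (n : ℤ), (H - Dop) z n = (v n : ℂ) * z n := by
    intro z n
    have h1 : (H - Dop) z = H z - Dop z := rfl
    rw [h1]
    have h2 : ((H z - Dop z : Hs) : ∀ _ : ℤ, ℂ) n = H z n - Dop z n := by
      rw [lp.coeFn_sub]; rfl
    rw [h2, hH z n, Dop_apply]
    ring
  have hVsym : inner ℂ ((H - Dop) x) y = inner ℂ x ((H - Dop) y) := by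
    rw [lp.inner_eq_tsum, lp.inner_eq_tsum]
    apply tsum_congr
    intro n
    simp only [RCLike.inner_apply, hV x n, hV y n, map_mul, Complex.conj_ofReal]
    ring
  have hadd : ∀ z : Hs, H z = Dop z + (H - Dop) z := by
    intro z
    rw [ContinuousLinearMap.sub_apply]; abel
  calc inner ℂ (H x) y = inner ℂ (Dop x + (H - Dop) x) y := by rw [← hadd]
    _ = inner ℂ (Dop x) y + inner ℂ ((H - Dop) x) y := inner_add_left _ _ _
    _ = inner ℂ x (Dop y) + inner ℂ x ((H - Dop) y) :=
        congrArg₂ HAdd.hAdd (hDsym x y) hVsym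
    _ = inner ℂ x (Dop y + (H - Dop) y) := (inner_add_right _ _ _).symm
    _ = inner ℂ x (H y) := by rw [← hadd]

lemma master :
    (H - algebraMap ℂ (Hs →L[ℂ] Hs) (v 0)) * (H - algebraMap ℂ (Hs →L[ℂ] Hs) (v 1))
      = Dop * Dop := by
  refine ContinuousLinearMap.ext fun x => lp.ext (funext fun n => ?_)
  rw [ContinuousLinearMap.mul_apply, ContinuousLinearMap.mul_apply]
  set y : Hs := (H - algebraMap ℂ (Hs →L[ℂ] Hs) (v 1)) x with hy
  have hyc : ∀ m : ℤ, y m = H x m - (v 1 : ℂ) * x m := fun m => sub_alg_apply H _ x m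
  rw [sub_alg_apply H (v 0) y n, hH y n, hyc (n + 1), hyc (n - 1), hyc n,
    hH x (n + 1), hH x (n - 1), hH x n]
  rw [Dop_apply, Dop_apply, Dop_apply]
  have e1 : n + 1 + 1 = n + 2 := by ring
  have e2 : n + 1 - 1 = n := by ring
  have e3 : n - 1 + 1 = n := by ring
  have e4 : n - 1 - 1 = n - 2 := by ring
  rw [e1, e2, e3, e4]
  have cA : ((v (n + 1) : ℂ)) + (v n : ℂ) = (v 0 : ℂ) + (v 1 : ℂ) := by
    exact_mod_cast congrArg (Complex.ofReal) (v_pair_sum v hper n)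
  have cB : ((v n : ℂ) - v 0) * ((v n : ℂ) - v 1) = 0 := by
    exact_mod_cast congrArg (Complex.ofReal) (v_prod v hper n)
  have cC : ((v (n - 1) : ℂ)) = (v (n + 1) : ℂ) := by
    exact_mod_cast congrArg (Complex.ofReal) (v_shift v hper n)
  linear_combination (x (n + 1) + x (n - 1)) * cA + x n * cB + x (n - 1) * cC

lemma spec_q (t : ℝ) (ht : (t : ℂ) ∈ spectrum ℂ H) :
    ((((t - v 0) * (t - v 1) : ℝ)) : ℂ) ∈ spectrum ℂ (Dop * Dop) := by
  set T : ℂ := (t : ℂ) with hT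
  set R : ℂ := (v 0 : ℂ) + (v 1 : ℂ) - T with hR
  rw [spectrum.mem_iff] at ht ⊢
  intro hu
  apply ht
  have key : algebraMap ℂ (Hs →L[ℂ] Hs) ((((t - v 0) * (t - v 1) : ℝ)) : ℂ) - Dop * Dop
      = -((H - algebraMap ℂ (Hs →L[ℂ] Hs) T) * (H - algebraMap ℂ (Hs →L[ℂ] Hs) R)) := by
    rw [← master v hper H hH, quad_expand H, quad_expand H]
    have e1 : T + R = (v 0 : ℂ) + (v 1 : ℂ) := by rw [hR]; ring
    have e2 : ((((t - v 0) * (t - v 1) : ℝ)) : ℂ)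
        = (v 0 : ℂ) * (v 1 : ℂ) - T * R := by rw [hR, hT]; push_cast; ring
    rw [e1, e2, map_sub]
    abel
  rw [key] at hu
  have hu2 := hu.neg
  rw [neg_neg] at hu2
  have hcomm : Commute (H - algebraMap ℂ (Hs →L[ℂ] Hs) T)
      (H - algebraMap ℂ (Hs →L[ℂ] Hs) R) :=
    Commute.sub_left
      (Commute.sub_right (Commute.refl H) (Algebra.commute_algebraMap_left R H).symm)
      (Commute.sub_right (Algebra.commute_algebraMap_left T H)
        (Algebra.commute_algebraMap_left T _))
  have hfac := (hcomm.isUnit_mul_iff.1 hu2).1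
  have hfin := hfac.neg
  rwa [neg_sub] at hfin

lemma weyl_core (t lam : ℝ) (hlam0 : 0 ≤ lam) (hlam2 : lam ≤ 2)
    (u0 u1 : ℝ)
    (e0 : (v 0 - t) * u0 + lam * u1 = 0)
    (e1 : lam * u0 + (v 1 - t) * u1 = 0)
    (hnz : u0 ≠ 0 ∨ u1 ≠ 0) :
    (t : ℂ) ∈ spectrum ℂ H := by
  set ζ : ℂ := ⟨lam / 2, Real.sqrt (1 - (lam / 2) ^ 2)⟩ with hζdef
  have hhalf : (lam / 2) ^ 2 ≤ 1 := by nlinarith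
  have hnsq : Complex.normSq ζ = 1 := by
    rw [hζdef, Complex.normSq_mk, Real.mul_self_sqrt (by nlinarith)]
    ring
  have hζ0 : ζ ≠ 0 := by
    intro h
    rw [h, Complex.normSq_zero] at hnsq
    norm_num at hnsq
  have habs : ‖ζ‖ = 1 := by rw [Complex.norm_def, hnsq, Real.sqrt_one]
  have hinv : ζ⁻¹ = (starRingEnd ℂ) ζ := by
    apply inv_eq_of_mul_eq_one_right
    rw [Complex.mul_conj, hnsq]
    norm_num
  have hsum : ζ + ζ⁻¹ = (lam : ℂ) := by
    rw [hinv, Complex.add_conj]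
    have hre : ζ.re = lam / 2 := rfl
    rw [hre]
    push_cast
    ring
  have e0c : ((v 0 : ℂ) - t) * u0 + lam * u1 = 0 := by exact_mod_cast congrArg Complex.ofReal e0
  have e1c : (lam : ℂ) * u0 + ((v 1 : ℂ) - t) * u1 = 0 := by
    exact_mod_cast congrArg Complex.ofReal e1
  have bloch : ∀ n : ℤ, wfun ζ u0 u1 (n + 1) + wfun ζ u0 u1 (n - 1)
      + ((v n : ℂ) - t) * wfun ζ u0 u1 n = 0 := by
    intro n
    have hz1 : ζ ^ (n + 1) = ζ ^ n * ζ := zpow_add_one₀ hζ0 n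
    have hz2 : ζ ^ (n - 1) = ζ ^ n * ζ⁻¹ := zpow_sub_one₀ hζ0 n
    rcases Int.even_or_odd n with he | ho
    · have h1 : ¬ Even (n + 1) := by rw [Int.even_add_one]; exact fun h => h he
      have h2 : ¬ Even (n - 1) := by rw [Int.even_sub_one]; exact fun h => h he
      rw [wfun, wfun, wfun, if_neg h1, if_neg h2, if_pos he, v_eq v hper n, if_pos he, hz1, hz2]
      linear_combination (ζ ^ n * (u1 : ℂ)) * hsum + ζ ^ n * e0c
    · have h0 : ¬ Even n := Int.not_even_iff_odd.2 ho
      have h1 : Even (n + 1) := Int.even_add_one.2 h0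
      have h2 : Even (n - 1) := Int.even_sub_one.2 h0
      rw [wfun, wfun, wfun, if_pos h1, if_pos h2, if_neg h0, v_eq v hper n, if_neg h0, hz1, hz2]
      linear_combination (ζ ^ n * (u0 : ℂ)) * hsum + ζ ^ n * e1c
  set B : ℝ := max |u0| |u1| with hBdef
  have hB0 : 0 ≤ B := le_trans (abs_nonneg u0) (le_max_left _ _)
  set K : ℝ := (2 + |v 0 - t| + |v 1 - t|) * B with hKdef
  have hK0 : 0 ≤ K := by
    apply mul_nonneg _ hB0
    positivity
  by_contra hspec
  rw [spectrum.notMem_iff] at hspec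
  obtain ⟨U, hU⟩ := hspec
  set C : ℝ := ‖((↑U⁻¹ : Hs →L[ℂ] Hs))‖ with hCdef
  have hC0 : 0 ≤ C := norm_nonneg _
  -- the contradiction quantity
  have key : ∀ N : ℕ, ∃ a : ℝ, 0 < a ∧ (a = |u0| ∨ a = |u1|) ∧
      ((N : ℝ) + 1) * a ^ 2 ≤ C ^ 2 * (4 * K ^ 2) := by
    intro N
    set xN : Hs := truncLp (wfun ζ u0 u1) N with hxNdef
    have hxcoord : ∀ n : ℤ, xN n = if 0 ≤ n ∧ n ≤ 2 * N + 1 then wfun ζ u0 u1 n else 0 :=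
      fun n => rfl
    have hxB : ∀ n : ℤ, ‖xN n‖ ≤ B := by
      intro n
      rw [hxcoord n]
      by_cases h : 0 ≤ n ∧ n ≤ 2 * N + 1
      · rw [if_pos h, wfun_norm habs]
        by_cases hev : Even n
        · rw [if_pos hev]; exact le_max_left _ _
        · rw [if_neg hev]; exact le_max_right _ _
      · rw [if_neg h]; simpa using hB0
    set gN : Hs := H xN - (algebraMap ℂ (Hs →L[ℂ] Hs) (t : ℂ)) xN with hgNdef
    have hgcoord : ∀ n : ℤ, gN n = xN (n + 1) + xN (n - 1) + ((v n : ℂ) - t) * xN n := by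
      intro n
      have h1 : gN n = ((H - algebraMap ℂ (Hs →L[ℂ] Hs) (t : ℂ)) xN) n := by
        rw [ContinuousLinearMap.sub_apply, hgNdef]
      rw [h1, sub_alg_apply, hH xN n]
      ring
    have hgK : ∀ n : ℤ, ‖gN n‖ ≤ K := by
      intro n
      rw [hgcoord n]
      have hv : |v n - t| ≤ |v 0 - t| + |v 1 - t| := by
        rcases Int.even_or_odd n with he | ho
        · rw [v_eq v hper n, if_pos he]
          nlinarith [abs_nonneg (v 1 - t)]
        · rw [v_eq v hper n, if_neg (Int.not_even_iff_odd.2 ho)]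
          nlinarith [abs_nonneg (v 0 - t)]
      have hnv : ‖((v n : ℂ) - t)‖ = |v n - t| := by
        rw [show ((v n : ℂ) - (t : ℂ)) = ((v n - t : ℝ) : ℂ) by push_cast; ring,
          Complex.norm_real, Real.norm_eq_abs]
      calc ‖xN (n + 1) + xN (n - 1) + ((v n : ℂ) - t) * xN n‖
          ≤ ‖xN (n + 1) + xN (n - 1)‖ + ‖((v n : ℂ) - t) * xN n‖ := norm_add_le _ _
        _ ≤ ‖xN (n + 1)‖ + ‖xN (n - 1)‖ + ‖((v n : ℂ) - t)‖ * ‖xN n‖ := by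
            rw [norm_mul]
            have := norm_add_le (xN (n + 1)) (xN (n - 1))
            linarith
        _ ≤ B + B + (|v 0 - t| + |v 1 - t|) * B := by
            have h1 := hxB (n + 1)
            have h2 := hxB (n - 1)
            have h3 := hxB n
            have h4 := norm_nonneg (xN n)
            have h5 : ‖((v n : ℂ) - t)‖ * ‖xN n‖ ≤ (|v 0 - t| + |v 1 - t|) * B := by
              apply mul_le_mul (hnv ▸ hv) h3 h4
              positivity
            linarith
        _ = K := by rw [hKdef]; ring
    set F : Finset ℤ := {(-1 : ℤ), (0 : ℤ), 2 * (N : ℤ) + 1, 2 * (N : ℤ) + 2} with hFdef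
    have hgsupp : ∀ n : ℤ, n ∉ F → gN n = 0 := by
      intro n hn
      simp only [hFdef, Finset.mem_insert, Finset.mem_singleton] at hn
      push_neg at hn
      rw [hgcoord n]
      rcases (by omega : n ≤ -2 ∨ (1 ≤ n ∧ n ≤ 2 * N) ∨ 2 * N + 3 ≤ n) with h | h | h
      · rw [hxcoord (n + 1), hxcoord (n - 1), hxcoord n,
          if_neg (by omega), if_neg (by omega), if_neg (by omega)]
        ring
      · rw [hxcoord (n + 1), hxcoord (n - 1), hxcoord n,
          if_pos (by omega), if_pos (by omega), if_pos (by omega)]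
        exact bloch n
      · rw [hxcoord (n + 1), hxcoord (n - 1), hxcoord n,
          if_neg (by omega), if_neg (by omega), if_neg (by omega)]
        ring
    have hcard : (F.card : ℝ) ≤ 4 := by
      have h4 : F.card ≤ 4 := by
        rw [hFdef]
        refine le_trans (Finset.card_insert_le _ _) (Nat.succ_le_succ ?_)
        refine le_trans (Finset.card_insert_le _ _) (Nat.succ_le_succ ?_)
        refine le_trans (Finset.card_insert_le _ _) (Nat.succ_le_succ ?_)
        simp
      exact_mod_cast h4
    have hgnorm : ‖gN‖ ^ 2 ≤ 4 * K ^ 2 := by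
      calc ‖gN‖ ^ 2 ≤ (F.card : ℝ) * K ^ 2 := norm_sq_le_of_support gN F K hK0 hgK hgsupp
        _ ≤ 4 * K ^ 2 := by nlinarith
    -- resolvent bound
    have hres : ‖xN‖ ≤ C * ‖gN‖ := by
      have hz : ((↑U⁻¹ : Hs →L[ℂ] Hs)) (((algebraMap ℂ (Hs →L[ℂ] Hs) (t : ℂ)) - H) xN) = xN := by
        have : ((↑U⁻¹ : Hs →L[ℂ] Hs)) (((algebraMap ℂ (Hs →L[ℂ] Hs) (t : ℂ)) - H) xN)
            = (((↑U⁻¹ : Hs →L[ℂ] Hs)) * ((algebraMap ℂ (Hs →L[ℂ] Hs) (t : ℂ)) - H)) xN := rfl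
        rw [this, ← hU, Units.inv_mul]
        rfl
      have hneg : (((algebraMap ℂ (Hs →L[ℂ] Hs) (t : ℂ)) - H) xN) = -gN := by
        rw [ContinuousLinearMap.sub_apply, hgNdef]
        abel
      calc ‖xN‖ = ‖((↑U⁻¹ : Hs →L[ℂ] Hs)) (((algebraMap ℂ (Hs →L[ℂ] Hs) (t : ℂ)) - H) xN)‖ := by
            rw [hz]
        _ ≤ C * ‖(((algebraMap ℂ (Hs →L[ℂ] Hs) (t : ℂ)) - H) xN)‖ :=
            ContinuousLinearMap.le_opNorm _ _
        _ = C * ‖gN‖ := by rw [hneg, norm_neg]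
    have hup : ‖xN‖ ^ 2 ≤ C ^ 2 * (4 * K ^ 2) := by
      have h1 : ‖xN‖ ^ 2 ≤ (C * ‖gN‖) ^ 2 := by
        have := lp.norm_nonneg' xN
        nlinarith
      calc ‖xN‖ ^ 2 ≤ (C * ‖gN‖) ^ 2 := h1
        _ = C ^ 2 * ‖gN‖ ^ 2 := by ring
        _ ≤ C ^ 2 * (4 * K ^ 2) := by nlinarith
    -- lower bound
    rcases hnz with h0 | h1
    · refine ⟨|u0|, abs_pos.2 h0, Or.inl rfl, ?_⟩
      have hlow : ((N : ℝ) + 1) * |u0| ^ 2 ≤ ‖xN‖ ^ 2 := by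
        have := sum_lower xN |u0| (abs_nonneg u0) N (fun k => 2 * (k : ℤ))
          (fun k l h => by dsimp only at h; omega) ?_
        · exact_mod_cast this
        · intro k hk
          rw [Finset.mem_range] at hk
          dsimp only
          rw [hxcoord, if_pos (by constructor <;> omega), wfun_norm habs,
            if_pos ⟨(k : ℤ), by ring⟩]
      linarith
    · refine ⟨|u1|, abs_pos.2 h1, Or.inr rfl, ?_⟩
      have hlow : ((N : ℝ) + 1) * |u1| ^ 2 ≤ ‖xN‖ ^ 2 := by
        have := sum_lower xN |u1| (abs_nonneg u1) N (fun k => 2 * (k : ℤ) + 1)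
          (fun k l h => by dsimp only at h; omega) ?_
        · exact_mod_cast this
        · intro k hk
          rw [Finset.mem_range] at hk
          dsimp only
          rw [hxcoord, if_pos (by constructor <;> omega), wfun_norm habs,
            if_neg (by rw [Int.even_add_one]; exact fun h => h ⟨(k : ℤ), by ring⟩)]
      linarith
  -- choose N large
  obtain ⟨N, hN⟩ := exists_nat_gt
    (max (C ^ 2 * (4 * K ^ 2) / u0 ^ 2) (C ^ 2 * (4 * K ^ 2) / u1 ^ 2))
  obtain ⟨a, ha0, hcases, hbound⟩ := key N
  have hfin : C ^ 2 * (4 * K ^ 2) < (N : ℝ) * a ^ 2 := by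
    rcases hcases with h | h
    · have hu0 : u0 ≠ 0 := by
        intro hz
        rw [h, hz, abs_zero] at ha0
        exact lt_irrefl 0 ha0
      have hpos : 0 < u0 ^ 2 := by positivity
      have h2 : C ^ 2 * (4 * K ^ 2) / u0 ^ 2 < (N : ℝ) :=
        lt_of_le_of_lt (le_max_left _ _) hN
      have h3 := (div_lt_iff₀ hpos).1 h2
      rw [h, _root_.sq_abs]
      linarith
    · have hu1 : u1 ≠ 0 := by
        intro hz
        rw [h, hz, abs_zero] at ha0
        exact lt_irrefl 0 ha0
      have hpos : 0 < u1 ^ 2 := by positivity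
      have h2 : C ^ 2 * (4 * K ^ 2) / u1 ^ 2 < (N : ℝ) :=
        lt_of_le_of_lt (le_max_right _ _) hN
      have h3 := (div_lt_iff₀ hpos).1 h2
      rw [h, _root_.sq_abs]
      linarith
  nlinarith [sq_nonneg a]


lemma weyl (t : ℝ) (hq0 : 0 ≤ (t - v 0) * (t - v 1)) (hq4 : (t - v 0) * (t - v 1) ≤ 4) :
    (t : ℂ) ∈ spectrum ℂ H := by
  set lam := Real.sqrt ((t - v 0) * (t - v 1)) with hlamdef
  have hlam2 : lam ^ 2 = (t - v 0) * (t - v 1) := Real.sq_sqrt hq0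
  have hlam0 : 0 ≤ lam := Real.sqrt_nonneg _
  have hlamle : lam ≤ 2 := by nlinarith
  by_cases hc : t = v 0
  · apply weyl_core v hper H hH t lam hlam0 hlamle 1 0 ?_ ?_ (Or.inl one_ne_zero)
    · rw [hc]; ring
    · have hz : lam = 0 := by
        rw [hlamdef, hc]
        simp
      rw [hz]; ring
  · apply weyl_core v hper H hH t lam hlam0 hlamle lam (t - v 0) ?_ ?_
      (Or.inr (sub_ne_zero.2 hc))
    · ring
    · linear_combination hlam2

omit hper hH in
lemma band_iff (t : ℝ) :
    (t ∈ Set.Icc ((v 0 + v 1 - Real.sqrt (16 + v 0 ^ 2 - 2 * v 0 * v 1 + v 1 ^ 2)) / 2)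
          (min (v 0) (v 1)) ∪
        Set.Icc (max (v 0) (v 1))
          ((v 0 + v 1 + Real.sqrt (16 + v 0 ^ 2 - 2 * v 0 * v 1 + v 1 ^ 2)) / 2))
      ↔ (0 ≤ (t - v 0) * (t - v 1) ∧ (t - v 0) * (t - v 1) ≤ 4) := by
  set δ := Real.sqrt (16 + v 0 ^ 2 - 2 * v 0 * v 1 + v 1 ^ 2) with hδdef
  have hδsq : δ ^ 2 = 16 + (v 0 - v 1) ^ 2 := by
    rw [hδdef, Real.sq_sqrt (by nlinarith [sq_nonneg (v 0 - v 1)])]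
    ring
  have hδ0 : 0 ≤ δ := Real.sqrt_nonneg _
  have hδ4 : 4 ≤ δ := by nlinarith [sq_nonneg (v 0 - v 1)]
  constructor
  · rintro (⟨hl, hr⟩ | ⟨hl, hr⟩)
    · have h0 : t ≤ v 0 := le_trans hr (min_le_left _ _)
      have h1 : t ≤ v 1 := le_trans hr (min_le_right _ _)
      constructor
      · nlinarith
      · nlinarith [mul_nonneg (by linarith : (0:ℝ) ≤ δ + (2 * t - v 0 - v 1))
          (by linarith : (0:ℝ) ≤ -(2 * t - v 0 - v 1))]
    · have h0 : v 0 ≤ t := le_trans (le_max_left _ _) hl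
      have h1 : v 1 ≤ t := le_trans (le_max_right _ _) hl
      constructor
      · nlinarith
      · nlinarith [mul_nonneg (by linarith : (0:ℝ) ≤ δ - (2 * t - v 0 - v 1))
          (by linarith : (0:ℝ) ≤ 2 * t - v 0 - v 1)]
  · rintro ⟨h0, h4⟩
    have hs : (2 * t - v 0 - v 1) ^ 2 ≤ δ ^ 2 := by nlinarith
    have hsl : -δ ≤ 2 * t - v 0 - v 1 := by nlinarith
    have hsr : 2 * t - v 0 - v 1 ≤ δ := by nlinarith
    rcases mul_nonneg_iff.1 h0 with ⟨ha, hb⟩ | ⟨ha, hb⟩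
    · right
      constructor
      · rw [max_le_iff]
        constructor <;> linarith
      · linarith
    · left
      constructor
      · linarith
      · rw [le_min_iff]
        constructor <;> linarith

end Potential

end Stmt5Aux

end

/-- The spectrum of a 2-periodic discrete Schrödinger operator on `ℓ²(ℤ)` consists of the
two explicit bands. -/
theorem stmt5 (v : ℤ → ℝ) (hper : ∀ n : ℤ, v (n + 2) = v n)
    (H : lp (fun _ : ℤ => ℂ) 2 →L[ℂ] lp (fun _ : ℤ => ℂ) 2)
    (hH : ∀ (x : lp (fun _ : ℤ => ℂ) 2) (n : ℤ),
      H x n = x (n + 1) + x (n - 1) + (v n : ℂ) * x n) :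
    spectrum ℂ H = Complex.ofReal ''
      (Set.Icc ((v 0 + v 1 - Real.sqrt (16 + v 0 ^ 2 - 2 * v 0 * v 1 + v 1 ^ 2)) / 2)
          (min (v 0) (v 1)) ∪
        Set.Icc (max (v 0) (v 1))
          ((v 0 + v 1 + Real.sqrt (16 + v 0 ^ 2 - 2 * v 0 * v 1 + v 1 ^ 2)) / 2)) := by
  ext ξ
  constructor
  · intro hξ
    have hre : ξ = (ξ.re : ℂ) := (Stmt5Aux.H_selfAdjoint v H hH).mem_spectrum_eq_re hξ
    refine ⟨ξ.re, ?_, hre.symm⟩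
    have hspec : ((ξ.re : ℝ) : ℂ) ∈ spectrum ℂ H := by rw [← hre]; exact hξ
    have hq := Stmt5Aux.spec_q v hper H hH ξ.re hspec
    obtain ⟨-, h0, h4⟩ := Stmt5Aux.Dsq_spec_bounds hq
    rw [Complex.ofReal_re] at h0 h4
    exact (Stmt5Aux.band_iff v ξ.re).2 ⟨h0, h4⟩
  · rintro ⟨t, htmem, rfl⟩
    obtain ⟨h0, h4⟩ := (Stmt5Aux.band_iff v t).1 htmem
    exact Stmt5Aux.weyl v hper H hH t h0 h4
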